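/- Let F ∈ ℚ[x,y] be a polynomial invariant under both σ: (x,y) ↦ (-y,x) and τ: (x,y) ↦ (y,x). Then F is a polynomial with rational coefficients in the two elements x²y² and x²+y²; equivalently, F can be written as ∑_{m even, r ≥ 0} e_{m,r} (xy)^m (1-x²-y²)^r with e_{m,r} ∈ ℚ. -/

import Mathlib

open MvPolynomial

namespace SigmaTauAux

noncomputable section

abbrev R2 := MvPolynomial (Fin 2) ℚ

lemma aeval_two {S : Type*} [CommSemiring S] [Algebra ℚ S] (f : Fin 2 → S)
    (d : Fin 2 →₀ ℕ) (c : ℚ) :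
    aeval f (monomial d c) = algebraMap ℚ S c * (f 0 ^ d 0 * f 1 ^ d 1) := by
  rw [aeval_monomial, Finsupp.prod_fintype _ _ (fun i => pow_zero _), Fin.prod_univ_two]

lemma monomial_two (d : Fin 2 →₀ ℕ) (c : ℚ) :
    (monomial d c : R2) = C c * (X 0 ^ d 0 * X 1 ^ d 1) := by
  rw [monomial_eq, Finsupp.prod_fintype _ _ (fun i => pow_zero _), Fin.prod_univ_two]

def dbl (d : Fin 2 →₀ ℕ) : Fin 2 →₀ ℕ := d.mapRange (fun n => 2 * n) (by simp)

def half (d : Fin 2 →₀ ℕ) : Fin 2 →₀ ℕ := d.mapRange (fun n => n / 2) (by simp)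

@[simp] lemma dbl_apply (d : Fin 2 →₀ ℕ) (i : Fin 2) : dbl d i = 2 * d i := rfl
@[simp] lemma half_apply (d : Fin 2 →₀ ℕ) (i : Fin 2) : half d i = d i / 2 := rfl

lemma dbl_inj : Function.Injective dbl := by
  intro u v h
  ext i
  have h2 : 2 * u i = 2 * v i := by
    have := DFunLike.congr_fun h i
    simpa using this
  omega

lemma dbl_half (d : Fin 2 →₀ ℕ) (h : ∀ i, Even (d i)) : dbl (half d) = d := by
  ext i
  have : 2 ∣ d i := (h i).two_dvd
  simp [Nat.mul_div_cancel' this]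

lemma D_monomial (d : Fin 2 →₀ ℕ) (c : ℚ) :
    aeval ![(X 0 : R2) ^ 2, X 1 ^ 2] (monomial d c) = monomial (dbl d) c := by
  rw [aeval_two, monomial_two]
  simp only [Matrix.cons_val_zero, Matrix.cons_val_one, Matrix.head_cons, dbl_apply,
    MvPolynomial.algebraMap_eq]
  rw [← pow_mul, ← pow_mul]

lemma coeff_D (H : R2) (d : Fin 2 →₀ ℕ) :
    coeff (dbl d) (aeval ![(X 0 : R2) ^ 2, X 1 ^ 2] H) = coeff d H := by
  induction H using MvPolynomial.induction_on' with
  | monomial u c =>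
    rw [D_monomial, coeff_monomial, coeff_monomial]
    by_cases h : u = d
    · simp [h]
    · rw [if_neg (fun hc => h (dbl_inj hc)), if_neg h]
  | add p q hp hq => rw [map_add, coeff_add, coeff_add, hp, hq]

lemma D_inj : Function.Injective (aeval ![(X 0 : R2) ^ 2, X 1 ^ 2] : R2 → R2) := by
  intro p q h
  apply MvPolynomial.ext
  intro d
  rw [← coeff_D p d, ← coeff_D q d, h]

lemma neg0_monomial (u : Fin 2 →₀ ℕ) (c : ℚ) :
    aeval ![-(X 0 : R2), X 1] (monomial u c) = monomial u ((-1) ^ (u 0) * c) := by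
  rw [aeval_two, monomial_two]
  simp only [Matrix.cons_val_zero, Matrix.cons_val_one, Matrix.head_cons,
    MvPolynomial.algebraMap_eq, map_mul, map_pow, map_neg, map_one]
  rw [neg_pow]
  ring

lemma neg1_monomial (u : Fin 2 →₀ ℕ) (c : ℚ) :
    aeval ![(X 0 : R2), -(X 1)] (monomial u c) = monomial u ((-1) ^ (u 1) * c) := by
  rw [aeval_two, monomial_two]
  simp only [Matrix.cons_val_zero, Matrix.cons_val_one, Matrix.head_cons,
    MvPolynomial.algebraMap_eq, map_mul, map_pow, map_neg, map_one]
  rw [neg_pow]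
  ring

lemma coeff_neg0 (H : R2) (d : Fin 2 →₀ ℕ) :
    coeff d (aeval ![-(X 0 : R2), X 1] H) = (-1) ^ (d 0) * coeff d H := by
  induction H using MvPolynomial.induction_on' with
  | monomial u c =>
    rw [neg0_monomial, coeff_monomial, coeff_monomial]
    by_cases h : u = d
    · subst h; simp
    · simp [h]
  | add p q hp hq => rw [map_add, coeff_add, coeff_add, hp, hq]; ring

lemma coeff_neg1 (H : R2) (d : Fin 2 →₀ ℕ) :
    coeff d (aeval ![(X 0 : R2), -(X 1)] H) = (-1) ^ (d 1) * coeff d H := by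
  induction H using MvPolynomial.induction_on' with
  | monomial u c =>
    rw [neg1_monomial, coeff_monomial, coeff_monomial]
    by_cases h : u = d
    · subst h; simp
    · simp [h]
  | add p q hp hq => rw [map_add, coeff_add, coeff_add, hp, hq]; ring

lemma esymm_two : esymm (Fin 2) ℚ 2 = (X 0 : R2) * X 1 := by
  have hps : Finset.powersetCard 2 (Finset.univ : Finset (Fin 2)) = {Finset.univ} := by decide
  rw [esymm, hps]
  simp [Fin.prod_univ_two]

end

end SigmaTauAux

open SigmaTauAux

/-- If `F ∈ ℚ[x,y]` is invariant under both `σ : (x,y) ↦ (-y,x)` and `τ : (x,y) ↦ (y,x)`,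
then `F` is a polynomial with rational coefficients in `x²y²` and `x²+y²`; equivalently,
`F` is a polynomial in `x²y²` and `g = 1-x²-y²` (which encodes the expansion
`F = ∑_{m even, r≥0} e_{m,r} (xy)^m g^r`). -/
theorem sigma_tau_invariant_structure (F : MvPolynomial (Fin 2) ℚ)
    (hσ : aeval ![-(X 1 : MvPolynomial (Fin 2) ℚ), X 0] F = F)
    (hτ : aeval ![(X 1 : MvPolynomial (Fin 2) ℚ), X 0] F = F) :
    (∃ P : MvPolynomial (Fin 2) ℚ,
      F = aeval ![(X 0 : MvPolynomial (Fin 2) ℚ) ^ 2 * X 1 ^ 2, X 0 ^ 2 + X 1 ^ 2] P) ∧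
    (∃ P : MvPolynomial (Fin 2) ℚ,
      F = aeval ![(X 0 : MvPolynomial (Fin 2) ℚ) ^ 2 * X 1 ^ 2,
          1 - X 0 ^ 2 - X 1 ^ 2] P) := by
  -- derived invariances
  have h1 : aeval ![-(X 0 : R2), X 1] F = F := by
    have h := congrArg (aeval ![(X 1 : R2), X 0]) hσ
    rw [comp_aeval_apply, hτ] at h
    have hf : (fun i => aeval ![(X 1 : R2), X 0] (![-(X 1 : R2), X 0] i))
        = ![-(X 0 : R2), X 1] := by
      funext i; fin_cases i <;> simp
    rwa [hf] at h
  have h2 : aeval ![(X 0 : R2), -(X 1)] F = F := by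
    have h := congrArg (aeval ![-(X 1 : R2), X 0]) hτ
    rw [comp_aeval_apply, hσ] at h
    have hf : (fun i => aeval ![-(X 1 : R2), X 0] (![(X 1 : R2), X 0] i))
        = ![(X 0 : R2), -(X 1)] := by
      funext i; fin_cases i <;> simp
    rwa [hf] at h
  -- parity of exponents
  have hev : ∀ d ∈ F.support, ∀ i, Even (d i) := by
    intro d hd i
    have hc : coeff d F ≠ 0 := mem_support_iff.mp hd
    fin_cases i
    · rcases Nat.even_or_odd (d 0) with h | h
      · exact h
      · exfalso
        have hcc := coeff_neg0 F d
        rw [h1, Odd.neg_one_pow h] at hcc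
        exact hc (by linarith)
    · rcases Nat.even_or_odd (d 1) with h | h
      · exact h
      · exfalso
        have hcc := coeff_neg1 F d
        rw [h2, Odd.neg_one_pow h] at hcc
        exact hc (by linarith)
  -- halved polynomial
  set G : R2 := ∑ d ∈ F.support, monomial (half d) (coeff d F) with hGdef
  have hDG : aeval ![(X 0 : R2) ^ 2, X 1 ^ 2] G = F := by
    rw [hGdef, map_sum]
    calc ∑ d ∈ F.support, aeval ![(X 0 : R2) ^ 2, X 1 ^ 2] (monomial (half d) (coeff d F))
        = ∑ d ∈ F.support, monomial d (coeff d F) := by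
          refine Finset.sum_congr rfl fun d hd => ?_
          rw [D_monomial, dbl_half d (hev d hd)]
      _ = F := F.as_sum.symm
  -- G is swap-invariant
  have hTG : aeval ![(X 1 : R2), X 0] G = G := by
    apply D_inj
    have f1 : (fun i => aeval ![(X 0 : R2) ^ 2, X 1 ^ 2] (![(X 1 : R2), X 0] i))
        = ![(X 1 : R2) ^ 2, X 0 ^ 2] := by
      funext i; fin_cases i <;> simp
    have f2 : (fun i => aeval ![(X 1 : R2), X 0] (![(X 0 : R2) ^ 2, X 1 ^ 2] i))
        = ![(X 1 : R2) ^ 2, X 0 ^ 2] := by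
      funext i; fin_cases i <;> simp
    have e1 : aeval ![(X 0 : R2) ^ 2, X 1 ^ 2] (aeval ![(X 1 : R2), X 0] G)
        = aeval ![(X 1 : R2) ^ 2, X 0 ^ 2] G := by
      rw [comp_aeval_apply, f1]
    have e2 : aeval ![(X 1 : R2), X 0] (aeval ![(X 0 : R2) ^ 2, X 1 ^ 2] G)
        = aeval ![(X 1 : R2) ^ 2, X 0 ^ 2] G := by
      rw [comp_aeval_apply, f2]
    rw [e1, ← e2, hDG, hτ]
  -- G is symmetric
  have htwo : ∀ j : Fin 2, j = 0 ∨ j = 1 := by decide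
  have hsym : G.IsSymmetric := by
    intro e
    have hre : (rename ⇑e) G = aeval (fun i => (X (e i) : R2)) G := by
      have h : (rename ⇑e : R2 →ₐ[ℚ] R2) = aeval (fun i => (X (e i) : R2)) := by
        apply MvPolynomial.algHom_ext; intro i; simp
      exact DFunLike.congr_fun h G
    have hne : e 1 ≠ e 0 := fun h => absurd (e.injective h) (by decide)
    rcases htwo (e 0) with h0 | h0
    · have h1' : e 1 = 1 := by
        rcases htwo (e 1) with h | h
        · rw [h0] at hne; exact absurd h hne
        · exact h
      have hx : (fun i => (X (e i) : R2)) = X := by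
        funext i
        rcases htwo i with rfl | rfl
        · rw [h0]
        · rw [h1']
      rw [hre, hx, aeval_X_left_apply]
    · have h1' : e 1 = 0 := by
        rcases htwo (e 1) with h | h
        · exact h
        · rw [h0] at hne; exact absurd h hne
      have hx : (fun i => (X (e i) : R2)) = ![X 1, X 0] := by
        funext i
        rcases htwo i with rfl | rfl
        · simp [h0]
        · simp [h1']
      rw [hre, hx, hTG]
  -- fundamental theorem of symmetric polynomials
  obtain ⟨Q, hQ⟩ := esymmAlgHom_surjective (σ := Fin 2) (R := ℚ) (n := 2) (by simp) ⟨G, hsym⟩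
  have hGQ : G = aeval (fun i : Fin 2 => esymm (Fin 2) ℚ ((i : ℕ) + 1)) Q := by
    have h := esymmAlgHom_apply (σ := Fin 2) (R := ℚ) (n := 2) Q
    rw [hQ] at h
    exact h
  have hes : (fun i : Fin 2 => esymm (Fin 2) ℚ ((i : ℕ) + 1))
      = ![(X 0 : R2) + X 1, X 0 * X 1] := by
    funext i
    fin_cases i
    · simp [Fin.sum_univ_two, esymm_one (Fin 2) ℚ]
    · simpa using esymm_two
  have hGQ' : G = aeval ![(X 0 : R2) + X 1, X 0 * X 1] Q := by rw [hGQ, hes]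
  have hF : F = aeval ![(X 0 : R2) ^ 2 + X 1 ^ 2, X 0 ^ 2 * X 1 ^ 2] Q := by
    have hf : (fun i => aeval ![(X 0 : R2) ^ 2, X 1 ^ 2] (![(X 0 : R2) + X 1, X 0 * X 1] i))
        = ![(X 0 : R2) ^ 2 + X 1 ^ 2, X 0 ^ 2 * X 1 ^ 2] := by
      funext i; fin_cases i <;> simp [mul_pow]
    rw [← hDG, hGQ', comp_aeval_apply, hf]
  have hP1 : F = aeval ![(X 0 : R2) ^ 2 * X 1 ^ 2, X 0 ^ 2 + X 1 ^ 2]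
      (aeval ![(X 1 : R2), X 0] Q) := by
    have hf : (fun i => aeval ![(X 0 : R2) ^ 2 * X 1 ^ 2, X 0 ^ 2 + X 1 ^ 2] (![(X 1 : R2), X 0] i))
        = ![(X 0 : R2) ^ 2 + X 1 ^ 2, X 0 ^ 2 * X 1 ^ 2] := by
      funext i; fin_cases i <;> simp
    rw [comp_aeval_apply, hf, hF]
  refine ⟨⟨_, hP1⟩, ?_⟩
  refine ⟨aeval ![(X 0 : R2), 1 - X 1] (aeval ![(X 1 : R2), X 0] Q), ?_⟩
  have hf : (fun i => aeval ![(X 0 : R2) ^ 2 * X 1 ^ 2, 1 - X 0 ^ 2 - X 1 ^ 2]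
        (![(X 0 : R2), 1 - X 1] i))
      = ![(X 0 : R2) ^ 2 * X 1 ^ 2, X 0 ^ 2 + X 1 ^ 2] := by
    funext i
    rcases htwo i with rfl | rfl
    · simp
    · simp only [Matrix.cons_val_one, Matrix.head_cons, Matrix.cons_val_zero, map_sub, map_one,
        aeval_X]
      ring
  rw [comp_aeval_apply, hf, hP1]
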